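/- A vertex-colored graph (G, σ) is both an LDT graph and an rs-Fitch graph if and only if (G, σ) is a properly colored complete multipartite graph. -/

import Mathlib

/-- A rooted tree, modeled by its ancestor partial order `le` (x `le` y means
y is an ancestor of x, i.e., y lies on the path from the root to x), together
with last common ancestors `lca`.  The `chain` condition states that the set
of ancestors of any vertex is totally ordered, as in a rooted tree. -/
structure TreeOrder (V : Type) where
  le : V → V → Prop
  le_refl : ∀ x, le x x
  le_antisymm : ∀ x y, le x y → le y x → x = y
  le_trans : ∀ x y z, le x y → le y z → le x z
  chain : ∀ x y z, le x y → le x z → le y z ∨ le z y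
  lca : V → V → V
  le_lca_left : ∀ x y, le x (lca x y)
  le_lca_right : ∀ x y, le y (lca x y)
  lca_le : ∀ x y z, le x z → le y z → le (lca x y) z

/-- A leaf is a `⪯`-minimal vertex. -/
def TreeOrder.IsLeaf {V : Type} (t : TreeOrder V) (x : V) : Prop :=
  ∀ y, t.le y x → y = x

/-- A time map: strict descendants get strictly smaller times. -/
def TreeOrder.IsTimeMap {V : Type} (t : TreeOrder V) (tau : V → ℝ) : Prop :=
  ∀ x y, t.le x y → x ≠ y → tau x < tau y

/-- The tree displays the rooted triple `ab|c`. -/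
def TreeOrder.displays {V : Type} (t : TreeOrder V) (a b c : V) : Prop :=
  t.le (t.lca a b) (t.lca a c) ∧ t.lca a b ≠ t.lca a c ∧ t.lca a c = t.lca b c

/-- A vertex coloring is proper if adjacent vertices get distinct colors. -/
def ProperlyColored {L M : Type} (G : SimpleGraph L) (sigma : L → M) : Prop :=
  ∀ a b, G.Adj a b → sigma a ≠ sigma b

/-- `G` contains no induced path on four vertices. -/
def P4Free {L : Type} (G : SimpleGraph L) : Prop :=
  ¬ ∃ a b c d : L, a ≠ b ∧ a ≠ c ∧ a ≠ d ∧ b ≠ c ∧ b ≠ d ∧ c ≠ d ∧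
    G.Adj a b ∧ G.Adj b c ∧ G.Adj c d ∧ ¬ G.Adj a c ∧ ¬ G.Adj a d ∧ ¬ G.Adj b d

/-- The color triple set 𝔖(G, σ): all `(A, B, C)` (read as the rooted triple
`AB|C` on colors) such that there are vertices `x, y, z` with pairwise distinct
colors `A = σ x`, `B = σ y`, `C = σ z`, `xz, yz ∈ E` and `xy ∉ E`. -/
def tripleSetS {L M : Type} (G : SimpleGraph L) (sigma : L → M) : Set (M × M × M) :=
  {p | ∃ x y z : L, sigma x = p.1 ∧ sigma y = p.2.1 ∧ sigma z = p.2.2 ∧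
    p.1 ≠ p.2.1 ∧ p.1 ≠ p.2.2 ∧ p.2.1 ≠ p.2.2 ∧
    G.Adj x z ∧ G.Adj y z ∧ ¬ G.Adj x y}

/-- A set of rooted triples (on the label set `M`) is compatible: some tree,
with the labels placed on leaves, displays all of them. -/
def TripleSetCompatible {M : Type} (R : Set (M × M × M)) : Prop :=
  ∃ (W : Type) (t : TreeOrder W) (g : M → W), Function.Injective g ∧
    (∀ m, t.IsLeaf (g m)) ∧
    ∀ A B C : M, (A, B, C) ∈ R → t.displays (g A) (g B) (g C)

/-- Characterization of LDT graphs (taken as the definition): a properly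
colored cograph whose color triple set 𝔖(G, σ) is compatible. -/
def IsLDTchar {L M : Type} (G : SimpleGraph L) (sigma : L → M) : Prop :=
  ProperlyColored G sigma ∧ P4Free G ∧ TripleSetCompatible (tripleSetS G sigma)

/-- A graph is complete multipartite: there is an equivalence relation
(whose classes are the independent sets) such that two vertices are adjacent
iff they are inequivalent. -/
def IsCompleteMultipartite {L : Type} (G : SimpleGraph L) : Prop :=
  ∃ r : L → L → Prop, Equivalence r ∧ ∀ a b, G.Adj a b ↔ ¬ r a b

/-- The independent sets (parts) of a complete multipartite graph `G`:
for each vertex `x`, its part is the set of vertices non-adjacent to `x`. -/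
def parts {L : Type} (G : SimpleGraph L) : Set (Set L) :=
  {I | ∃ x : L, I = {y | ¬ G.Adj x y}}

/-- The auxiliary graph 𝔄(σ, 𝒥) on the color set `M`: distinct colors
`m, m'` are adjacent iff both occur on some member of the family `𝒥`. -/
def auxGraph {L M : Type} (sigma : L → M) (J : Set (Set L)) : SimpleGraph M where
  Adj m m' := m ≠ m' ∧ ∃ I ∈ J, m ∈ sigma '' I ∧ m' ∈ sigma '' I
  symm := by
    constructor
    intro m m' h
    obtain ⟨hne, I, hI, h1, h2⟩ := h
    exact ⟨hne.symm, I, hI, h2, h1⟩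
  loopless := by
    constructor
    intro m h
    exact h.1 rfl

/-- Characterization of rs-Fitch graphs (taken as the definition):
a complete multipartite graph `(G, σ)` such that, if it has more than one
independent set, some independent set `I'` can be removed so that the
auxiliary graph 𝔄(σ, ℐ∖{I'}) is disconnected. -/
def IsRsFitchChar {L M : Type} (G : SimpleGraph L) (sigma : L → M) : Prop :=
  IsCompleteMultipartite G ∧
    ((parts G).Nontrivial →
      ∃ I' ∈ parts G, ¬ (auxGraph sigma ((parts G) \ {I'})).Preconnected)

section AuxTree

variable {M : Type} (s : Setoid M)

/-- Ancestor order on the 3-level tree: leaves `M`, middle nodes `Quotient s`,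
root `Unit`. -/
private def tle : (M ⊕ (Quotient s ⊕ Unit)) → (M ⊕ (Quotient s ⊕ Unit)) → Prop
  | Sum.inl a, Sum.inl b => a = b
  | Sum.inl a, Sum.inr (Sum.inl q) => Quotient.mk s a = q
  | Sum.inl _, Sum.inr (Sum.inr _) => True
  | Sum.inr (Sum.inl q), Sum.inr (Sum.inl q') => q = q'
  | Sum.inr (Sum.inl _), Sum.inr (Sum.inr _) => True
  | Sum.inr (Sum.inr _), Sum.inr (Sum.inr _) => True
  | Sum.inr (Sum.inl _), Sum.inl _ => False
  | Sum.inr (Sum.inr _), Sum.inl _ => False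
  | Sum.inr (Sum.inr _), Sum.inr (Sum.inl _) => False

open Classical in
private noncomputable def tlca :
    (M ⊕ (Quotient s ⊕ Unit)) → (M ⊕ (Quotient s ⊕ Unit)) → (M ⊕ (Quotient s ⊕ Unit))
  | Sum.inl a, Sum.inl b =>
      if a = b then Sum.inl a
      else if Quotient.mk s a = Quotient.mk s b then Sum.inr (Sum.inl (Quotient.mk s a))
      else Sum.inr (Sum.inr ())
  | Sum.inl a, Sum.inr (Sum.inl q) =>
      if Quotient.mk s a = q then Sum.inr (Sum.inl q) else Sum.inr (Sum.inr ())
  | Sum.inr (Sum.inl q), Sum.inl a =>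
      if Quotient.mk s a = q then Sum.inr (Sum.inl q) else Sum.inr (Sum.inr ())
  | Sum.inr (Sum.inl q), Sum.inr (Sum.inl q') =>
      if q = q' then Sum.inr (Sum.inl q) else Sum.inr (Sum.inr ())
  | Sum.inl _, Sum.inr (Sum.inr _) => Sum.inr (Sum.inr ())
  | Sum.inr (Sum.inl _), Sum.inr (Sum.inr _) => Sum.inr (Sum.inr ())
  | Sum.inr (Sum.inr _), _ => Sum.inr (Sum.inr ())

private noncomputable def treeOf : TreeOrder (M ⊕ (Quotient s ⊕ Unit)) where
  le := tle s
  le_refl := by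
    rintro (a | q | u) <;> simp [tle]
  le_antisymm := by
    rintro (a | q | u) (b | q' | u') <;> simp_all [tle] <;> intro h h' <;> simp_all
  le_trans := by
    rintro (a | q | u) (b | q' | u') (c | q'' | u'') <;> simp_all [tle] <;>
      intro h h' <;> simp_all
  chain := by
    rintro (a | q | u) (b | q' | u') (c | q'' | u'') <;> simp_all [tle] <;>
      intro h h' <;> simp_all
  lca := tlca s
  le_lca_left := by
    rintro (a | q | u) (b | q' | u') <;> simp only [tle, tlca] <;> split_ifs <;>
      simp_all [tle]
  le_lca_right := by
    rintro (a | q | u) (b | q' | u') <;> simp only [tle, tlca] <;> split_ifs <;>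
      first
        | (simp_all [tle]; done)
        | (simp only [tle]; rename_i h1 h2; exact h2.symm)
  lca_le := by
    rintro (a | q | u) (b | q' | u') (c | q'' | u'') <;> simp only [tle, tlca] <;>
      (try split_ifs) <;> (try (simp_all [tle]; done))
    all_goals
      simp only [tle]
      intro h1 h2
      first
        | (rename_i hn
           first
             | exact hn (h1.trans h2.symm)
             | exact hn (h2.trans h1.symm))
        | (rename_i hne hn
           first
             | exact hne (h1.trans h2.symm)
             | exact hn (h1.trans h2.symm)
             | exact hn (h2.trans h1.symm))

private lemma treeOf_leaf (m : M) : (treeOf s).IsLeaf (Sum.inl m) := by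
  rintro (b | q | u) h <;> simp_all [treeOf, tle]

/-- Any triple set consisting only of triples `AB|C` with `A ≈ B`, `A ≉ C`,
`B ≉ C` (for an equivalence `≈`) is compatible. -/
private lemma compat_of_rel (R : Set (M × M × M))
    (h : ∀ A B C, (A, B, C) ∈ R → s.r A B ∧ ¬ s.r A C ∧ ¬ s.r B C ∧ A ≠ B) :
    TripleSetCompatible R := by
  refine ⟨M ⊕ (Quotient s ⊕ Unit), treeOf s, Sum.inl, fun a b hab => by injection hab,
    treeOf_leaf s, ?_⟩
  intro A B C hR
  obtain ⟨hAB, hAC, hBC, hne⟩ := h A B C hR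
  have hACne : A ≠ C := fun hh => hAC (hh ▸ s.refl A)
  have hqAB : Quotient.mk s A = Quotient.mk s B := Quotient.sound hAB
  have hqAC : ¬ (Quotient.mk s A = Quotient.mk s C) := fun hh => hAC (Quotient.exact hh)
  have hBCne : B ≠ C := fun hh => hBC (hh ▸ s.refl B)
  have hqBC : ¬ (Quotient.mk s B = Quotient.mk s C) := fun hh => hBC (Quotient.exact hh)
  have h1 : (treeOf s).lca (Sum.inl A) (Sum.inl B) = Sum.inr (Sum.inl (Quotient.mk s A)) := by
    simp only [treeOf, tlca]
    rw [if_neg hne, if_pos hqAB]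
  have h2 : (treeOf s).lca (Sum.inl A) (Sum.inl C) = Sum.inr (Sum.inr ()) := by
    simp only [treeOf, tlca]
    rw [if_neg hACne, if_neg hqAC]
  have h3 : (treeOf s).lca (Sum.inl B) (Sum.inl C) = Sum.inr (Sum.inr ()) := by
    simp only [treeOf, tlca]
    rw [if_neg hBCne, if_neg hqBC]
  refine ⟨?_, ?_, ?_⟩
  · rw [h1, h2]; simp [treeOf, tle]
  · rw [h1, h2]; simp
  · rw [h2, h3]

end AuxTree

/-- Along a walk in the auxiliary graph over a subfamily of the parts,
vertices with the endpoint colors stay in the same part. -/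
private lemma walk_color_rel {L M : Type} (G : SimpleGraph L) (sigma : L → M)
    (r : L → L → Prop) (hre : Equivalence r) (hadj : ∀ a b, G.Adj a b ↔ ¬ r a b)
    (hpc : ProperlyColored G sigma) (Jset : Set (Set L)) (hJ : Jset ⊆ parts G) :
    ∀ {m m' : M} (_ : (auxGraph sigma Jset).Walk m m') (u v : L),
      sigma u = m → sigma v = m' → r u v := by
  have samecolor : ∀ u v : L, sigma u = sigma v → r u v := by
    intro u v h
    by_contra hn
    exact hpc u v ((hadj u v).2 hn) h
  intro m m' w
  induction w with
  | nil =>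
    intro u v hu hv
    exact samecolor u v (hu.trans hv.symm)
  | @cons m m₁ m' h p ih =>
    intro u v hu hv
    obtain ⟨hne, I0, hI0, ⟨u', hu'I, hu'⟩, ⟨w', hw'I, hw'⟩⟩ := h
    obtain ⟨x0, hx0⟩ := hJ hI0
    have ru'w' : r u' w' := by
      have h1 : ¬ G.Adj x0 u' := by rw [hx0] at hu'I; exact hu'I
      have h2 : ¬ G.Adj x0 w' := by rw [hx0] at hw'I; exact hw'I
      have r1 : r x0 u' := by by_contra hn; exact h1 ((hadj x0 u').2 hn)
      have r2 : r x0 w' := by by_contra hn; exact h2 ((hadj x0 w').2 hn)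
      exact hre.trans (hre.symm r1) r2
    have ruu' : r u u' := samecolor u u' (hu.trans hu'.symm)
    have rw'v : r w' v := ih w' v hw' hv
    exact hre.trans (hre.trans ruu' ru'w') rw'v

/-- `(G, σ)` is both an LDT graph and an rs-Fitch graph iff
it is a properly colored complete multipartite graph. -/
theorem stmt14 {L M : Type} [Fintype L] [Fintype M]
    (G : SimpleGraph L) (sigma : L → M) :
    (IsLDTchar G sigma ∧ IsRsFitchChar G sigma) ↔
      (ProperlyColored G sigma ∧ IsCompleteMultipartite G) := by
  constructor
  · rintro ⟨⟨hpc, -, -⟩, hcm, -⟩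
    exact ⟨hpc, hcm⟩
  · rintro ⟨hpc, hcm⟩
    obtain ⟨r, hre, hadj⟩ := hcm
    have samecolor : ∀ u v : L, sigma u = sigma v → r u v := by
      intro u v h
      by_contra hn
      exact hpc u v ((hadj u v).2 hn) h
    have rofnadj : ∀ u v : L, ¬ G.Adj u v → r u v := by
      intro u v h
      by_contra hn
      exact h ((hadj u v).2 hn)
    refine ⟨⟨hpc, ?_, ?_⟩, ⟨r, hre, hadj⟩, ?_⟩
    · -- P4-free
      rintro ⟨a, b, c, d, hab, hac, had, hbc, hbd, hcd, Aab, Abc, Acd, nac, nad, nbd⟩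
      have rcd : r c d := hre.trans (hre.symm (rofnadj a c nac)) (rofnadj a d nad)
      exact (hadj c d).1 Acd rcd
    · -- triple set compatible
      set rM : M → M → Prop := fun A B =>
        A = B ∨ ∃ u v : L, sigma u = A ∧ sigma v = B ∧ r u v with hrM
      have rMequiv : Equivalence rM := by
        constructor
        · intro A; exact Or.inl rfl
        · rintro A B (rfl | ⟨u, v, hu, hv, huv⟩)
          · exact Or.inl rfl
          · exact Or.inr ⟨v, u, hv, hu, hre.symm huv⟩
        · rintro A B C (rfl | ⟨u, v, hu, hv, huv⟩) hBC
          · exact hBC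
          · rcases hBC with rfl | ⟨v', w, hv', hw, hvw⟩
            · exact Or.inr ⟨u, v, hu, hv, huv⟩
            · exact Or.inr ⟨u, w, hu, hw,
                hre.trans huv (hre.trans (samecolor v v' (hv.trans hv'.symm)) hvw)⟩
      refine compat_of_rel ⟨rM, rMequiv⟩ _ ?_
      rintro A B C ⟨x, y, z, hx, hy, hz, hAB, hAC, hBC, axz, ayz, nxy⟩
      have hrAB : rM A B := Or.inr ⟨x, y, hx, hy, rofnadj x y nxy⟩
      have hnAC : ¬ rM A C := by
        rintro (rfl | ⟨u, w, hu, hw, huw⟩)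
        · exact hAC rfl
        · have rxz : r x z := hre.trans (hre.trans (samecolor x u (hx.trans hu.symm)) huw)
            (hre.symm (samecolor z w (hz.trans hw.symm)))
          exact (hadj x z).1 axz rxz
      have hnBC : ¬ rM B C := by
        rintro (rfl | ⟨u, w, hu, hw, huw⟩)
        · exact hBC rfl
        · have ryz : r y z := hre.trans (hre.trans (samecolor y u (hy.trans hu.symm)) huw)
            (hre.symm (samecolor z w (hz.trans hw.symm)))
          exact (hadj y z).1 ayz ryz
      exact ⟨hrAB, hnAC, hnBC, hAB⟩
    · -- rs-Fitch disconnection condition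
      intro hnt
      obtain ⟨I, hI, J, hJ, hIJ⟩ := hnt
      obtain ⟨x, hx⟩ := hI
      obtain ⟨y, hy⟩ := hJ
      have hnrxy : ¬ r x y := by
        intro hrxy
        apply hIJ
        rw [hx, hy]
        ext z
        simp only [Set.mem_setOf_eq]
        constructor
        · intro h
          intro hAzy
          exact (hadj y z).1 hAzy (hre.trans (hre.symm hrxy) (rofnadj x z h))
        · intro h
          intro hAzx
          exact (hadj x z).1 hAzx (hre.trans hrxy (rofnadj y z h))
      have hAxy : G.Adj x y := (hadj x y).2 hnrxy
      refine ⟨I, ⟨x, hx⟩, ?_⟩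
      intro hpre
      obtain ⟨w⟩ := hpre (sigma x) (sigma y)
      exact hnrxy (walk_color_rel G sigma r hre hadj hpc (parts G \ {I})
        Set.diff_subset w x y rfl rfl)
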